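/- With the relations →_k and ⇒_{k,n} on 2-element subsets of an algebra A defined via translations, if {a,b} ⇒_{k,m} {c,d} and {c,d} ⇒_{ℓ,n} {r,s}, then {a,b} ⇒_{k+ℓ, m·n} {r,s}. -/
import Mathlib


/-! An algebra is a type `A` with a family of finitary operations
`op i : (Fin (ar i) → A) → A` indexed by `i : ι`. -/

section Algebra

variable {A : Type*} {ι : Type*} {ar : ι → ℕ}

/-- A binary relation on `A` is compatible with the operations. -/
def IsCompatible (op : ∀ i, (Fin (ar i) → A) → A) (θ : A → A → Prop) : Prop :=
  ∀ i (f g : Fin (ar i) → A), (∀ j, θ (f j) (g j)) → θ (op i f) (op i g)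

/-- A congruence of the algebra: a compatible equivalence relation. -/
def IsCong (op : ∀ i, (Fin (ar i) → A) → A) (θ : A → A → Prop) : Prop :=
  Equivalence θ ∧ IsCompatible op θ

/-- `Cg op a b` is the principal congruence generated by the pair `(a, b)`:
the smallest congruence containing it. -/
def Cg (op : ∀ i, (Fin (ar i) → A) → A) (a b : A) : A → A → Prop :=
  fun x y => ∀ θ : A → A → Prop, IsCong op θ → θ a b → θ x y

/-- A basic translation: a fundamental operation with all but one argument fixed. -/
def IsBasicTranslation (op : ∀ i, (Fin (ar i) → A) → A) (f : A → A) : Prop :=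
  ∃ (i : ι) (j : Fin (ar i)) (p : Fin (ar i) → A),
    f = fun x => op i (Function.update p j x)

/-- `IsTranslation op k f`: `f` is a `k`-translation, i.e. a composition of at
most `k` basic translations (the identity is the unique `0`-translation). -/
inductive IsTranslation (op : ∀ i, (Fin (ar i) → A) → A) : ℕ → (A → A) → Prop
  | id : IsTranslation op 0 id
  | mono {k f} : IsTranslation op k f → IsTranslation op (k + 1) f
  | comp {k f g} : IsBasicTranslation op g → IsTranslation op k f →
      IsTranslation op (k + 1) (g ∘ f)

/-- `{a, b} →ₖ {c, d}`: some `k`-translation maps `{a, b}` onto `{c, d}`. -/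
def TrArrow (op : ∀ i, (Fin (ar i) → A) → A) (k : ℕ) (a b c d : A) : Prop :=
  ∃ f : A → A, IsTranslation op k f ∧ ({f a, f b} : Set A) = {c, d}

/-- `{a, b} ⇒_{k,n} {c, d}`: there is a chain `c = c₀, c₁, …, cₙ = d` in which
each link is trivial or the image of `{a, b}` under a `k`-translation. -/
def TrChain (op : ∀ i, (Fin (ar i) → A) → A) (k n : ℕ) (a b c d : A) : Prop :=
  ∃ e : Fin (n + 1) → A, e 0 = c ∧ e (Fin.last n) = d ∧
    ∀ i : Fin n, e i.castSucc = e i.succ ∨ TrArrow op k a b (e i.castSucc) (e i.succ)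

/-- `{a, b} ⇒ₖ {c, d}`: `{a, b} ⇒_{k,n} {c, d}` for some `n`. -/
def TrReach (op : ∀ i, (Fin (ar i) → A) → A) (k : ℕ) (a b c d : A) : Prop :=
  ∃ n : ℕ, TrChain op k n a b c d

/-- ℕ-indexed version of `TrChain`, easier to splice. -/
def TrChain' (op : ∀ i, (Fin (ar i) → A) → A) (k n : ℕ) (a b c d : A) : Prop :=
  ∃ g : ℕ → A, g 0 = c ∧ g n = d ∧
    ∀ i < n, g i = g (i + 1) ∨ TrArrow op k a b (g i) (g (i + 1))

theorem trChain_iff' {op : ∀ i, (Fin (ar i) → A) → A} {k n : ℕ} {a b c d : A} :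
    TrChain op k n a b c d ↔ TrChain' op k n a b c d := by
  constructor
  · rintro ⟨e, h0, hl, hlink⟩
    refine ⟨fun i => e ⟨min i n, by omega⟩, ?_, ?_, ?_⟩
    · simpa [Nat.min_eq_left (Nat.zero_le n)] using h0
    · simpa [Fin.last] using hl
    · intro i hi
      have := hlink ⟨i, hi⟩
      simpa [Fin.castSucc, Fin.succ, Fin.castAdd, Fin.castLE,
        Nat.min_eq_left (le_of_lt hi), Nat.min_eq_left hi] using this
  · rintro ⟨g, h0, hl, hlink⟩
    refine ⟨fun i => g i.val, h0, by simpa [Fin.last] using hl, ?_⟩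
    intro i
    simpa [Fin.castSucc, Fin.succ, Fin.castAdd, Fin.castLE] using hlink i.val i.isLt

theorem isTranslation_add_left {op : ∀ i, (Fin (ar i) → A) → A} {k : ℕ} {f : A → A}
    (h : IsTranslation op k f) (j : ℕ) : IsTranslation op (k + j) f := by
  induction j with
  | zero => exact h
  | succ j ih => exact IsTranslation.mono ih

theorem isTranslation_comp {op : ∀ i, (Fin (ar i) → A) → A} {k ℓ : ℕ} {f g : A → A}
    (hf : IsTranslation op ℓ f) (hg : IsTranslation op k g) :
    IsTranslation op (k + ℓ) (f ∘ g) := by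
  induction hf with
  | id => simpa using hg
  | mono _ ih => exact IsTranslation.mono ih
  | comp hb _ ih =>
    rw [Function.comp_assoc]
    exact IsTranslation.comp hb ih

theorem trChain'_map {op : ∀ i, (Fin (ar i) → A) → A} {k ℓ m : ℕ} {a b c d : A}
    {f : A → A} (hf : IsTranslation op ℓ f) (h : TrChain' op k m a b c d) :
    TrChain' op (k + ℓ) m a b (f c) (f d) := by
  obtain ⟨g, h0, hl, hlink⟩ := h
  refine ⟨fun i => f (g i), congrArg f h0, congrArg f hl, ?_⟩
  intro i hi
  rcases hlink i hi with h | ⟨t, ht, hts⟩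
  · exact Or.inl (congrArg f h)
  · refine Or.inr ⟨f ∘ t, isTranslation_comp hf ht, ?_⟩
    have : f '' {t a, t b} = f '' {g i, g (i + 1)} := by rw [hts]
    simpa [Set.image_pair] using this

theorem trChain'_symm {op : ∀ i, (Fin (ar i) → A) → A} {k m : ℕ} {a b c d : A}
    (h : TrChain' op k m a b c d) : TrChain' op k m a b d c := by
  obtain ⟨g, h0, hl, hlink⟩ := h
  refine ⟨fun i => g (m - i), by simpa using hl, by simpa using h0, ?_⟩
  intro i hi
  have hj : m - (i + 1) < m := by omega
  have h1 : m - i = m - (i + 1) + 1 := by omega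
  rcases hlink (m - (i + 1)) hj with h | ⟨t, ht, hts⟩
  · left; dsimp only; rw [h1]; exact h.symm
  · refine Or.inr ⟨t, ht, ?_⟩
    dsimp only
    rw [h1]
    exact hts.trans (Set.pair_comm _ _)

theorem trChain'_const {op : ∀ i, (Fin (ar i) → A) → A} (k m : ℕ) (a b x : A) :
    TrChain' op k m a b x x :=
  ⟨fun _ => x, rfl, rfl, fun _ _ => Or.inl rfl⟩

theorem trChain'_concat {op : ∀ i, (Fin (ar i) → A) → A} {k p q : ℕ} {a b x y z : A}
    (h1 : TrChain' op k p a b x y) (h2 : TrChain' op k q a b y z) :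
    TrChain' op k (p + q) a b x z := by
  obtain ⟨g, g0, gl, glink⟩ := h1
  obtain ⟨g', g'0, g'l, g'link⟩ := h2
  refine ⟨fun i => if i ≤ p then g i else g' (i - p), by simpa using g0, ?_, ?_⟩
  · by_cases hq : q = 0
    · subst hq; simp [gl, ← g'0, g'l]
    · have : ¬ (p + q ≤ p) := by omega
      simp [this, g'l]
  · intro i hi
    dsimp only
    by_cases hip : i < p
    · have h1 : i ≤ p := le_of_lt hip
      have h2 : i + 1 ≤ p := hip
      simpa [h1, h2] using glink i hip
    · have hiq : i - p < q := by omega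
      have h2 : ¬ (i + 1 ≤ p) := by omega
      have h3 : i + 1 - p = i - p + 1 := by omega
      have key : (if i ≤ p then g i else g' (i - p)) = g' (i - p) := by
        by_cases hip' : i ≤ p
        · have : i = p := by omega
          subst this
          simp [gl, ← g'0]
        · simp [hip']
      rw [key]
      simp only [h2, if_false, h3]
      exact g'link (i - p) hiq

theorem trChain'_comp {op : ∀ i, (Fin (ar i) → A) → A} {k ℓ m n : ℕ} {a b c d r s : A}
    (h₁ : TrChain' op k m a b c d) (h₂ : TrChain' op ℓ n c d r s) :
    TrChain' op (k + ℓ) (m * n) a b r s := by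
  obtain ⟨G, G0, Gl, Glink⟩ := h₂
  suffices H : ∀ j ≤ n, TrChain' op (k + ℓ) (m * j) a b (G 0) (G j) by
    rw [← G0, ← Gl]; exact H n le_rfl
  intro j hj
  induction j with
  | zero => exact trChain'_const _ _ _ _ _
  | succ j ih =>
    have hjn : j < n := hj
    have prev := ih (le_of_lt hjn)
    have step : TrChain' op (k + ℓ) m a b (G j) (G (j + 1)) := by
      rcases Glink j hjn with h | ⟨f, hf, hfs⟩
      · rw [← h]; exact trChain'_const _ _ _ _ _
      · have mapped := trChain'_map hf h₁
        rcases Set.pair_eq_pair_iff.mp hfs with ⟨e1, e2⟩ | ⟨e1, e2⟩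
        · rwa [e1, e2] at mapped
        · rw [e1, e2] at mapped
          exact trChain'_symm mapped
    have := trChain'_concat prev step
    rwa [show m * j + m = m * (j + 1) by ring] at this

end Algebra
theorem stmt_7 {A : Type*} {ι : Type*} {ar : ι → ℕ}
    (op : ∀ i, (Fin (ar i) → A) → A) (k ℓ m n : ℕ) (a b c d r s : A)
    (h₁ : TrChain op k m a b c d) (h₂ : TrChain op ℓ n c d r s) :
    TrChain op (k + ℓ) (m * n) a b r s := by
  rw [trChain_iff'] at *
  exact trChain'_comp h₁ h₂
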